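/- For every real x > 0, every h ∈ ℂ with Re(h) > 1, and every t ∈ ℂ, all the series below converge absolutely and Σ_{n=0}^{∞} β_{n,χ,q}^h(x) · t^n/n! = (h−1)(1−q) · Σ_{m=0}^{∞} q^{(h−1)m}·χ(m)·exp([x+m]_q·t) − t · Σ_{m=0}^{∞} q^{hm+x}·χ(m)·exp([x+m]_q·t). -/

import Mathlib

open Complex Finset Filter

/-- Complex power `q^z := exp(z·log q)` for a real base `q`. -/
noncomputable def qcpow (q : ℝ) (z : ℂ) : ℂ := Complex.exp (z * (Real.log q : ℂ))

/-- The complex `q`-number `[z]_q = (1 - q^z)/(1 - q)`. -/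
noncomputable def qnum (q : ℝ) (z : ℂ) : ℂ := (1 - qcpow q z) / (1 - (q : ℂ))

/-- The real `q`-number `[y]_q = (1 - q^y)/(1 - q)` for real `y`. -/
noncomputable def qnumR (q : ℝ) (y : ℝ) : ℝ := (1 - Real.exp (y * Real.log q)) / (1 - q)

/-- The `(h,q)`-Bernoulli polynomial
`β_{n,q}^h(x) = (1-q)^{-n} ∑_{l=0}^{n} C(n,l) (-1)^l q^{lx} (l+h-1)/[l+h-1]_q`. -/
noncomputable def qbeta (q : ℝ) (h : ℂ) (n : ℕ) (x : ℝ) : ℂ :=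
  (1 - (q : ℂ))⁻¹ ^ n * ∑ l ∈ Finset.range (n + 1),
    (n.choose l : ℂ) * (-1) ^ l * qcpow q ((l : ℂ) * (x : ℂ)) *
      (((l : ℂ) + h - 1) / qnum q ((l : ℂ) + h - 1))

/-- The generalized `(h,q)`-Bernoulli polynomial attached to a Dirichlet character `χ` mod `f`:
`β_{n,χ,q}^h(x) = [f]_q^{n-1} ∑_{a=0}^{f-1} χ(a) q^{(h-1)a} β_{n,q^f}^h((x+a)/f)`. -/
noncomputable def qbetaChi (q : ℝ) (h : ℂ) (f : ℕ) (χ : DirichletCharacter ℂ f)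
    (n : ℕ) (x : ℝ) : ℂ :=
  qnum q (f : ℂ) ^ ((n : ℤ) - 1) * ∑ a ∈ Finset.range f,
    χ (a : ZMod f) * qcpow q ((h - 1) * (a : ℂ)) * qbeta (q ^ f) h n ((x + a) / f)

lemma qcpow_add (q : ℝ) (z w : ℂ) : qcpow q (z + w) = qcpow q z * qcpow q w := by
  simp [qcpow, add_mul, Complex.exp_add]

lemma qcpow_nat_mul (q : ℝ) (n : ℕ) (z : ℂ) : qcpow q ((n : ℂ) * z) = qcpow q z ^ n := by
  simp [qcpow, mul_assoc, Complex.exp_nat_mul]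

lemma norm_qcpow (q : ℝ) (z : ℂ) : ‖qcpow q z‖ = Real.exp (z.re * Real.log q) := by
  rw [qcpow, Complex.norm_exp]
  congr 1
  simp [Complex.mul_re]

lemma qcpow_ofReal (q : ℝ) (y : ℝ) : qcpow q (y : ℂ) = (Real.exp (y * Real.log q) : ℂ) := by
  rw [qcpow, ← Complex.ofReal_mul, ← Complex.ofReal_exp]

lemma qnum_ofReal (q : ℝ) (y : ℝ) : qnum q (y : ℂ) = ((qnumR q y : ℝ) : ℂ) := by
  rw [qnum, qcpow_ofReal, qnumR]
  push_cast
  ring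

lemma norm_qcpow_lt_one (q : ℝ) (hq0 : 0 < q) (hq1 : q < 1) (w : ℂ) (hw : 0 < w.re) :
    ‖qcpow q w‖ < 1 := by
  rw [norm_qcpow]
  have hl : Real.log q < 0 := Real.log_neg hq0 hq1
  calc Real.exp (w.re * Real.log q) < Real.exp 0 := by
        apply Real.exp_lt_exp.2; nlinarith
    _ = 1 := Real.exp_zero

lemma one_sub_qcpow_ne_zero (q : ℝ) (hq0 : 0 < q) (hq1 : q < 1) (w : ℂ) (hw : 0 < w.re) :
    1 - qcpow q w ≠ 0 := by
  intro hcon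
  have h1 : qcpow q w = 1 := by linear_combination -hcon
  have := norm_qcpow_lt_one q hq0 hq1 w hw
  rw [h1] at this
  simp at this

lemma summable_qcpow (q : ℝ) (hq0 : 0 < q) (hq1 : q < 1) (w : ℂ) (hw : 0 < w.re) :
    Summable (fun m : ℕ => qcpow q (w * (m : ℂ))) := by
  have he : (fun m : ℕ => qcpow q (w * (m : ℂ))) = fun m : ℕ => qcpow q w ^ m := by
    funext m; rw [mul_comm w]; exact qcpow_nat_mul q m w
  rw [he]
  exact summable_geometric_of_norm_lt_one (norm_qcpow_lt_one q hq0 hq1 w hw)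

lemma tsum_qcpow (q : ℝ) (hq0 : 0 < q) (hq1 : q < 1) (w : ℂ) (hw : 0 < w.re) :
    ∑' m : ℕ, qcpow q (w * (m : ℂ)) = (1 - qcpow q w)⁻¹ := by
  have he : (fun m : ℕ => qcpow q (w * (m : ℂ))) = fun m : ℕ => qcpow q w ^ m := by
    funext m; rw [mul_comm w]; exact qcpow_nat_mul q m w
  rw [he]
  exact tsum_geometric_of_norm_lt_one (norm_qcpow_lt_one q hq0 hq1 w hw)

lemma qnumR_nonneg (q : ℝ) (hq0 : 0 < q) (hq1 : q < 1) (y : ℝ) (hy : 0 < y) :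
    0 ≤ qnumR q y := by
  have hl : Real.log q < 0 := Real.log_neg hq0 hq1
  have : Real.exp (y * Real.log q) < 1 := by
    rw [← Real.exp_zero]; apply Real.exp_lt_exp.2; nlinarith
  apply div_nonneg (by linarith) (by linarith)

lemma qnumR_le (q : ℝ) (hq0 : 0 < q) (hq1 : q < 1) (y : ℝ) (hy : 0 < y) :
    qnumR q y ≤ (1 - q)⁻¹ := by
  have he : 0 < Real.exp (y * Real.log q) := Real.exp_pos _
  rw [qnumR, div_le_iff₀ (by linarith)]
  rw [inv_mul_cancel₀ (by linarith : (1:ℝ) - q ≠ 0)]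
  linarith

lemma norm_qnumR_le (q : ℝ) (hq0 : 0 < q) (hq1 : q < 1) (y : ℝ) (hy : 0 < y) :
    ‖((qnumR q y : ℝ) : ℂ)‖ ≤ (1 - q)⁻¹ := by
  rw [Complex.norm_real, Real.norm_eq_abs,
    _root_.abs_of_nonneg (qnumR_nonneg q hq0 hq1 y hy)]
  exact qnumR_le q hq0 hq1 y hy

/-- Generic summability helper. -/
lemma summable_qcpow_mul (q : ℝ) (hq0 : 0 < q) (hq1 : q < 1) (w : ℂ) (hw : 0 < w.re)
    (u : ℕ → ℂ) (C : ℝ) (hu : ∀ m, ‖u m‖ ≤ C) :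
    Summable (fun m : ℕ => qcpow q (w * (m : ℂ)) * u m) := by
  have hr := norm_qcpow_lt_one q hq0 hq1 w hw
  apply Summable.of_norm_bounded (g := fun m => ‖qcpow q w‖ ^ m * C)
  · exact (summable_geometric_of_lt_one (norm_nonneg _) hr).mul_right C
  · intro m
    rw [norm_mul]
    have h1 : ‖qcpow q (w * (m : ℂ))‖ = ‖qcpow q w‖ ^ m := by
      rw [mul_comm w, qcpow_nat_mul, norm_pow]
    rw [h1]
    exact mul_le_mul_of_nonneg_left (hu m) (pow_nonneg (norm_nonneg _) m)

lemma sum_choose_neg_pow (n : ℕ) (y : ℂ) :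
    ∑ l ∈ Finset.range (n + 1), (n.choose l : ℂ) * (-1) ^ l * y ^ l = (1 - y) ^ n := by
  rw [show (1 : ℂ) - y = -y + 1 by ring, add_pow]
  apply Finset.sum_congr rfl
  intro l _
  rw [one_pow, neg_pow]
  ring

lemma sum_choose_neg_pow_mul (n : ℕ) (y : ℂ) :
    ∑ l ∈ Finset.range (n + 1), (n.choose l : ℂ) * (-1) ^ l * (l : ℂ) * y ^ l
      = -(n : ℂ) * y * (1 - y) ^ (n - 1) := by
  cases n with
  | zero => simp
  | succ n =>
    rw [Finset.sum_range_succ']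
    have hstep : ∀ k ∈ Finset.range (n + 1),
        ((n+1).choose (k+1) : ℂ) * (-1) ^ (k+1) * ((k+1 : ℕ) : ℂ) * y ^ (k+1)
        = (-((n : ℂ)+1) * y) * ((n.choose k : ℂ) * (-1) ^ k * y ^ k) := by
      intro k _
      have hc : ((n+1) * n.choose k : ℕ) = ((n+1).choose (k+1) * (k+1) : ℕ) :=
        Nat.add_one_mul_choose_eq n k
      have hc' : ((n:ℂ)+1) * (n.choose k : ℂ) = ((n+1).choose (k+1) : ℂ) * ((k:ℂ)+1) := by
        exact_mod_cast congrArg (Nat.cast : ℕ → ℂ) hc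
      push_cast
      linear_combination ((-1 : ℂ) ^ k * y ^ (k+1)) * hc'
    rw [Finset.sum_congr rfl hstep, ← Finset.mul_sum, sum_choose_neg_pow]
    simp

lemma sum_choose_key (n : ℕ) (h y : ℂ) :
    ∑ l ∈ Finset.range (n + 1), (n.choose l : ℂ) * (-1) ^ l * ((h - 1) + (l : ℂ)) * y ^ l
      = (h - 1) * (1 - y) ^ n - (n : ℂ) * y * (1 - y) ^ (n - 1) := by
  have e : ∀ l ∈ Finset.range (n + 1),
      (n.choose l : ℂ) * (-1) ^ l * ((h - 1) + (l : ℂ)) * y ^ l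
      = (h - 1) * ((n.choose l : ℂ) * (-1) ^ l * y ^ l)
        + (n.choose l : ℂ) * (-1) ^ l * (l : ℂ) * y ^ l := by
    intro l _; ring
  rw [Finset.sum_congr rfl e, Finset.sum_add_distrib, ← Finset.mul_sum,
    sum_choose_neg_pow, sum_choose_neg_pow_mul]
  ring


lemma norm_qcpow_le_one (q : ℝ) (hq0 : 0 < q) (hq1 : q < 1) (z : ℂ) (hz : 0 ≤ z.re) :
    ‖qcpow q z‖ ≤ 1 := by
  rw [norm_qcpow]
  have hl : Real.log q < 0 := Real.log_neg hq0 hq1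
  calc Real.exp (z.re * Real.log q) ≤ Real.exp 0 := by
        apply Real.exp_le_exp.2; nlinarith
    _ = 1 := Real.exp_zero

lemma qbeta_closed (q : ℝ) (hq0 : 0 < q) (hq1 : q < 1) (h : ℂ) (hh : 1 < h.re)
    (x : ℝ) (hx : 0 < x) (n : ℕ) :
    qbeta q h n x
      = (h - 1) * (1 - (q : ℂ)) *
          ∑' m : ℕ, qcpow q ((h - 1) * (m : ℂ)) * ((qnumR q (x + m) : ℝ) : ℂ) ^ n
        - (n : ℂ) * ∑' m : ℕ, qcpow q (h * (m : ℂ) + (x : ℂ)) * ((qnumR q (x + m) : ℝ) : ℂ) ^ (n - 1) := by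
  have h1q : (1 : ℂ) - (q : ℂ) ≠ 0 := by
    rw [sub_ne_zero]
    exact_mod_cast hq1.ne'
  have h1qR : (1 : ℝ) - q ≠ 0 := by linarith
  have hhre : (0:ℝ) < (h - 1).re := by simp [Complex.sub_re]; linarith
  have hxm : ∀ m : ℕ, (0:ℝ) < x + m := fun m => add_pos_of_pos_of_nonneg hx (Nat.cast_nonneg m)
  -- notation
  set c : ℕ → ℂ := fun m => ((qnumR q (x + m) : ℝ) : ℂ) with hc
  set y : ℕ → ℂ := fun m => qcpow q ((x : ℂ) + (m : ℂ)) with hy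
  have hy_eq : ∀ m, 1 - y m = (1 - (q : ℂ)) * c m := by
    intro m
    have e1 : ((x : ℂ) + (m : ℂ)) = (((x + m : ℝ)) : ℂ) := by push_cast; ring
    rw [hy]
    simp only [e1, qcpow_ofReal, hc, qnumR]
    push_cast
    field_simp
  have hyP : ∀ m : ℕ, qcpow q ((h - 1) * (m : ℂ)) * y m = qcpow q (h * (m : ℂ) + (x : ℂ)) := by
    intro m
    rw [hy]
    simp only []
    rw [← qcpow_add]
    congr 1
    ring
  have hyb : ∀ m, ‖y m‖ ≤ 1 := by
    intro m
    apply norm_qcpow_le_one q hq0 hq1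
    simp [Complex.add_re]
    positivity
  have hcb : ∀ k : ℕ, ∀ m : ℕ, ‖c m ^ k‖ ≤ ((1 - q)⁻¹) ^ k := by
    intro k m
    rw [norm_pow]
    exact pow_le_pow_left₀ (norm_nonneg _) (norm_qnumR_le q hq0 hq1 _ (hxm m)) k
  have hS1 : Summable (fun m : ℕ => qcpow q ((h - 1) * (m : ℂ)) * c m ^ n) :=
    summable_qcpow_mul q hq0 hq1 (h - 1) hhre _ _ (hcb n)
  have hS2 : Summable (fun m : ℕ => qcpow q (h * (m : ℂ) + (x : ℂ)) * c m ^ (n - 1)) := by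
    have e : (fun m : ℕ => qcpow q (h * (m : ℂ) + (x : ℂ)) * c m ^ (n - 1))
        = fun m : ℕ => qcpow q (h * (m : ℂ)) * (qcpow q (x : ℂ) * c m ^ (n - 1)) := by
      funext m; rw [qcpow_add]; ring
    rw [e]
    apply summable_qcpow_mul q hq0 hq1 h (by linarith) _ (‖qcpow q (x:ℂ)‖ * (1 - q)⁻¹ ^ (n-1))
    intro m
    rw [norm_mul]
    exact mul_le_mul_of_nonneg_left (hcb (n-1) m) (norm_nonneg _)
  -- expand each term of qbeta as a tsum
  have hterm : ∀ l ∈ Finset.range (n + 1),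
      (n.choose l : ℂ) * (-1) ^ l * qcpow q ((l : ℂ) * (x : ℂ)) *
        (((l : ℂ) + h - 1) / qnum q ((l : ℂ) + h - 1))
      = ∑' m : ℕ, (1 - (q : ℂ)) * ((n.choose l : ℂ) * (-1) ^ l * ((h - 1) + (l : ℂ)))
          * (qcpow q ((h - 1) * (m : ℂ)) * y m ^ l) := by
    intro l _
    have hwre : (0:ℝ) < ((l : ℂ) + h - 1).re := by
      simp [Complex.add_re, Complex.sub_re]
      have : (0:ℝ) ≤ (l : ℝ) := Nat.cast_nonneg l
      linarith
    have hne := one_sub_qcpow_ne_zero q hq0 hq1 _ hwre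
    have hgeo := tsum_qcpow q hq0 hq1 _ hwre
    have hpt : ∀ m : ℕ, (1 - (q : ℂ)) * ((n.choose l : ℂ) * (-1) ^ l * ((h - 1) + (l : ℂ)))
          * (qcpow q ((h - 1) * (m : ℂ)) * y m ^ l)
        = ((n.choose l : ℂ) * (-1) ^ l * qcpow q ((l : ℂ) * (x : ℂ)) * (((l : ℂ) + h - 1) * (1 - (q : ℂ))))
          * qcpow q (((l : ℂ) + h - 1) * (m : ℂ)) := by
      intro m
      have e2 : qcpow q ((h - 1) * (m : ℂ)) * y m ^ l
          = qcpow q ((l : ℂ) * (x : ℂ)) * qcpow q (((l : ℂ) + h - 1) * (m : ℂ)) := by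
        rw [hy]
        simp only []
        rw [← qcpow_nat_mul, ← qcpow_add, ← qcpow_add]
        congr 1
        ring
      rw [e2]
      ring
    rw [tsum_congr hpt, tsum_mul_left, hgeo, qnum]
    field_simp
  rw [qbeta, Finset.sum_congr rfl hterm]
  -- swap the finite sum and the tsum
  have hsum : ∀ l ∈ Finset.range (n + 1),
      Summable (fun m : ℕ => (1 - (q : ℂ)) * ((n.choose l : ℂ) * (-1) ^ l * ((h - 1) + (l : ℂ)))
        * (qcpow q ((h - 1) * (m : ℂ)) * y m ^ l)) := by
    intro l _
    apply Summable.mul_left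
    apply summable_qcpow_mul q hq0 hq1 (h - 1) hhre _ 1
    intro m
    rw [norm_pow]
    exact pow_le_one₀ (norm_nonneg _) (hyb m)
  rw [← Summable.tsum_finsetSum hsum, ← tsum_mul_left]
  -- evaluate the inner finite sum
  have hinner : ∀ m : ℕ,
      (1 - (q : ℂ))⁻¹ ^ n * ∑ l ∈ Finset.range (n + 1),
        (1 - (q : ℂ)) * ((n.choose l : ℂ) * (-1) ^ l * ((h - 1) + (l : ℂ)))
          * (qcpow q ((h - 1) * (m : ℂ)) * y m ^ l)
      = (h - 1) * (1 - (q : ℂ)) * (qcpow q ((h - 1) * (m : ℂ)) * c m ^ n)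
        - (n : ℂ) * (qcpow q (h * (m : ℂ) + (x : ℂ)) * c m ^ (n - 1)) := by
    intro m
    have e3 : ∀ l ∈ Finset.range (n + 1),
        (1 - (q : ℂ)) * ((n.choose l : ℂ) * (-1) ^ l * ((h - 1) + (l : ℂ)))
          * (qcpow q ((h - 1) * (m : ℂ)) * y m ^ l)
        = ((1 - (q : ℂ)) * qcpow q ((h - 1) * (m : ℂ)))
          * ((n.choose l : ℂ) * (-1) ^ l * ((h - 1) + (l : ℂ)) * y m ^ l) := by
      intro l _; ring
    rw [Finset.sum_congr rfl e3, ← Finset.mul_sum, sum_choose_key]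
    rw [← hyP m]
    cases n with
    | zero =>
      simp only [pow_zero, Nat.cast_zero, zero_mul, mul_one, zero_sub]
      ring
    | succ N =>
      simp only [Nat.succ_sub_one]
      rw [hy_eq m]
      rw [mul_pow, mul_pow]
      rw [inv_pow]
      field_simp
      ring
  rw [tsum_congr hinner]
  rw [Summable.tsum_sub (hS1.mul_left _) (hS2.mul_left _), tsum_mul_left, tsum_mul_left]


lemma summable_arith (f : ℕ) (hf : 1 ≤ f) (a : ℕ) (F : ℕ → ℂ) (hF : Summable F) :
    Summable (fun k : ℕ => F (a + f * k)) := by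
  apply hF.comp_injective
  intro k1 k2 hk
  simp only at hk
  have h2 : f * k1 = f * k2 := by omega
  exact Nat.eq_of_mul_eq_mul_left (by omega) h2

lemma tsum_split (f : ℕ) (hf : 1 ≤ f) (F : ℕ → ℂ) (hF : Summable F) :
    ∑' m : ℕ, F m = ∑ a ∈ Finset.range f, ∑' k : ℕ, F (a + f * k) := by
  haveI : NeZero f := ⟨by omega⟩
  have h1 : ∑' m, F m = ∑' p : ℕ × Fin f, F (p.1 * f + (p.2 : ℕ)) := by
    rw [← Equiv.tsum_eq ((Nat.divModEquiv f).symm) F]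
    apply tsum_congr; intro p
    simp [Nat.divModEquiv]
  have hFs : Summable (fun p : ℕ × Fin f => F (p.1 * f + (p.2 : ℕ))) := by
    apply ((Equiv.summable_iff ((Nat.divModEquiv f).symm)).2 hF).congr
    intro p
    simp [Nat.divModEquiv]
  rw [h1, Summable.tsum_prod' hFs (fun k => hFs.prod_factor k)]
  rw [tsum_congr (fun k => tsum_fintype (fun a : Fin f => F (k * f + (a : ℕ))))]
  rw [Summable.tsum_finsetSum (fun a _ => by
    have : (fun k : ℕ => F (k * f + (a : ℕ))) = fun k : ℕ => F ((a : ℕ) + f * k) := by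
      funext k; congr 1; ring
    rw [this]
    exact summable_arith f hf a F hF)]
  rw [← Fin.sum_univ_eq_sum_range (fun a => ∑' k : ℕ, F (a + f * k)) f]
  apply Finset.sum_congr rfl
  intro a _
  apply tsum_congr
  intro k
  congr 1
  ring

lemma summable_A (q : ℝ) (hq0 : 0 < q) (hq1 : q < 1) (h : ℂ) (hh : 1 < h.re)
    (f : ℕ) (χ : DirichletCharacter ℂ f) (x : ℝ) (hx : 0 < x) (k : ℕ) :
    Summable (fun m : ℕ => qcpow q ((h - 1) * (m : ℂ)) * χ (m : ZMod f) *
      ((qnumR q (x + m) : ℝ) : ℂ) ^ k) := by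
  have e : (fun m : ℕ => qcpow q ((h - 1) * (m : ℂ)) * χ (m : ZMod f) *
      ((qnumR q (x + m) : ℝ) : ℂ) ^ k)
      = fun m : ℕ => qcpow q ((h - 1) * (m : ℂ)) *
        (χ (m : ZMod f) * ((qnumR q (x + m) : ℝ) : ℂ) ^ k) := by
    funext m; ring
  rw [e]
  apply summable_qcpow_mul q hq0 hq1 (h - 1) (by simp [Complex.sub_re]; linarith) _ ((1 - q)⁻¹ ^ k)
  intro m
  rw [norm_mul, norm_pow]
  calc ‖χ (m : ZMod f)‖ * ‖((qnumR q (x + m) : ℝ) : ℂ)‖ ^ k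
      ≤ 1 * (1 - q)⁻¹ ^ k := by
        apply mul_le_mul (DirichletCharacter.norm_le_one χ _)
          (pow_le_pow_left₀ (norm_nonneg _) (norm_qnumR_le q hq0 hq1 _
            (add_pos_of_pos_of_nonneg hx (Nat.cast_nonneg m))) k)
          (by positivity) zero_le_one
    _ = (1 - q)⁻¹ ^ k := one_mul _

lemma summable_B (q : ℝ) (hq0 : 0 < q) (hq1 : q < 1) (h : ℂ) (hh : 1 < h.re)
    (f : ℕ) (χ : DirichletCharacter ℂ f) (x : ℝ) (hx : 0 < x) (k : ℕ) :
    Summable (fun m : ℕ => qcpow q (h * (m : ℂ) + (x : ℂ)) * χ (m : ZMod f) *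
      ((qnumR q (x + m) : ℝ) : ℂ) ^ k) := by
  have e : (fun m : ℕ => qcpow q (h * (m : ℂ) + (x : ℂ)) * χ (m : ZMod f) *
      ((qnumR q (x + m) : ℝ) : ℂ) ^ k)
      = fun m : ℕ => qcpow q (h * (m : ℂ)) *
        (qcpow q (x : ℂ) * χ (m : ZMod f) * ((qnumR q (x + m) : ℝ) : ℂ) ^ k) := by
    funext m; rw [qcpow_add]; ring
  rw [e]
  apply summable_qcpow_mul q hq0 hq1 h (by linarith) _ (‖qcpow q (x : ℂ)‖ * ((1 - q)⁻¹ ^ k))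
  intro m
  rw [norm_mul, norm_mul, norm_pow, mul_assoc]
  apply mul_le_mul_of_nonneg_left _ (norm_nonneg _)
  calc ‖χ (m : ZMod f)‖ * ‖((qnumR q (x + m) : ℝ) : ℂ)‖ ^ k
      ≤ 1 * (1 - q)⁻¹ ^ k := by
        apply mul_le_mul (DirichletCharacter.norm_le_one χ _)
          (pow_le_pow_left₀ (norm_nonneg _) (norm_qnumR_le q hq0 hq1 _
            (add_pos_of_pos_of_nonneg hx (Nat.cast_nonneg m))) k)
          (by positivity) zero_le_one
    _ = (1 - q)⁻¹ ^ k := one_mul _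

lemma qcpow_pow (q : ℝ) (hq0 : 0 < q) (f : ℕ) (z : ℂ) :
    qcpow (q ^ f) z = qcpow q ((f : ℂ) * z) := by
  rw [qcpow, qcpow, Real.log_pow]
  push_cast
  ring_nf

lemma qcpow_nat (q : ℝ) (hq0 : 0 < q) (f : ℕ) :
    qcpow q (f : ℂ) = ((q ^ f : ℝ) : ℂ) := by
  have e1 : ((f : ℕ) : ℂ) = (((f : ℝ)) : ℂ) := by push_cast; ring
  rw [e1, qcpow_ofReal]
  congr 1
  rw [Real.exp_nat_mul, Real.exp_log hq0]


lemma qbetaChi_closed (q : ℝ) (hq0 : 0 < q) (hq1 : q < 1) (h : ℂ) (hh : 1 < h.re)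
    (f : ℕ) (hf : 1 ≤ f) (χ : DirichletCharacter ℂ f) (x : ℝ) (hx : 0 < x) (n : ℕ) :
    qbetaChi q h f χ n x
      = (h - 1) * (1 - (q : ℂ)) *
          ∑' m : ℕ, qcpow q ((h - 1) * (m : ℂ)) * χ (m : ZMod f) * ((qnumR q (x + m) : ℝ) : ℂ) ^ n
        - (n : ℂ) * ∑' m : ℕ, qcpow q (h * (m : ℂ) + (x : ℂ)) * χ (m : ZMod f) *
            ((qnumR q (x + m) : ℝ) : ℂ) ^ (n - 1) := by
  have hfR : (0:ℝ) < (f : ℝ) := by exact_mod_cast (by omega : 0 < f)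
  have hfR' : (f : ℝ) ≠ 0 := hfR.ne'
  have hqf0 : 0 < q ^ f := pow_pos hq0 f
  have hqf1 : q ^ f < 1 := pow_lt_one₀ hq0.le hq1 (by omega)
  have h1q : (1 : ℂ) - (q : ℂ) ≠ 0 := by rw [sub_ne_zero]; exact_mod_cast hq1.ne'
  have h1qR : (1 : ℝ) - q ≠ 0 := by linarith
  have hqfR : (1 : ℝ) - q ^ f ≠ 0 := by linarith
  have hφval : qnum q (f : ℂ) = (1 - ((q ^ f : ℝ) : ℂ)) / (1 - (q : ℂ)) := by
    rw [qnum, qcpow_nat q hq0 f]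
  have hqfne : (1 : ℂ) - ((q ^ f : ℝ) : ℂ) ≠ 0 := by
    rw [sub_ne_zero]; exact_mod_cast hqf1.ne'
  have hφne : qnum q (f : ℂ) ≠ 0 := by rw [hφval]; exact div_ne_zero hqfne h1q
  have f4 : (1 : ℂ) - ((q ^ f : ℝ) : ℂ) = qnum q (f : ℂ) * (1 - (q : ℂ)) := by
    rw [hφval]; field_simp
  have f1 : ∀ a k : ℕ, qcpow q ((h - 1) * (((a + f * k : ℕ)) : ℂ))
      = qcpow q ((h - 1) * (a : ℂ)) * qcpow (q ^ f) ((h - 1) * (k : ℂ)) := by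
    intro a k
    rw [qcpow_pow q hq0, ← qcpow_add]
    congr 1
    push_cast
    ring
  have f5 : ∀ a k : ℕ,
      qcpow q (h * (((a + f * k : ℕ)) : ℂ) + (x : ℂ))
      = qcpow q ((h - 1) * (a : ℂ)) * qcpow (q ^ f) (h * (k : ℂ) + (((x + a) / f : ℝ) : ℂ)) := by
    intro a k
    rw [qcpow_pow q hq0, ← qcpow_add]
    congr 1
    have e5 : (f : ℂ) * (((x + a) / f : ℝ) : ℂ) = (x : ℂ) + (a : ℂ) := by
      have hfC : (f : ℂ) ≠ 0 := by exact_mod_cast (by positivity : (f:ℝ) ≠ 0)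
      push_cast
      rw [mul_div_assoc']
      exact mul_div_cancel_left₀ _ hfC
    rw [mul_add, e5]
    push_cast
    ring
  have f2 : ∀ a k : ℕ, χ (((a + f * k : ℕ)) : ZMod f) = χ ((a : ℕ) : ZMod f) := by
    intro a k
    congr 1
    push_cast
    simp [ZMod.natCast_self]
  have f3 : ∀ a k : ℕ, ((qnumR q (x + ((a + f * k : ℕ) : ℝ)) : ℝ) : ℂ)
      = qnum q (f : ℂ) * ((qnumR (q ^ f) ((x + a) / f + k) : ℝ) : ℂ) := by
    intro a k
    rw [hφval]
    have hreal : qnumR q (x + ((a + f * k : ℕ) : ℝ))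
        = (1 - q ^ f) / (1 - q) * qnumR (q ^ f) ((x + a) / f + k) := by
      rw [qnumR, qnumR, Real.log_pow]
      have he : ((x + (a:ℝ)) / f + k) * ((f : ℝ) * Real.log q)
          = (x + ((a + f * k : ℕ) : ℝ)) * Real.log q := by
        push_cast
        field_simp
        ring
      rw [he]
      field_simp
    rw [hreal]
    push_cast
    ring
  rw [qbetaChi]
  rw [tsum_split f hf _ (summable_A q hq0 hq1 h hh f χ x hx n),
      tsum_split f hf _ (summable_B q hq0 hq1 h hh f χ x hx (n - 1))]
  rw [Finset.mul_sum, Finset.mul_sum, Finset.mul_sum, ← Finset.sum_sub_distrib]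
  apply Finset.sum_congr rfl
  intro a _
  have hxa : 0 < (x + a) / f :=
    div_pos (add_pos_of_pos_of_nonneg hx (Nat.cast_nonneg a)) hfR
  rw [qbeta_closed (q ^ f) hqf0 hqf1 h hh ((x + a) / f) hxa n]
  rw [mul_sub, mul_sub]
  congr 1
  · rw [← tsum_mul_left, ← tsum_mul_left, ← tsum_mul_left, ← tsum_mul_left]
    apply tsum_congr
    intro k
    rw [f2, f3, f4, f1]
    cases n with
    | zero =>
      simp only [pow_zero, mul_one, Nat.cast_zero, CharP.cast_eq_zero]
      rw [show ((0 : ℤ) - 1 : ℤ) = -1 by norm_num, zpow_neg_one]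
      field_simp
    | succ N =>
      rw [show (((N + 1 : ℕ)) : ℤ) - 1 = (N : ℤ) by push_cast; ring, zpow_natCast, mul_pow]
      ring
  · rw [← tsum_mul_left, ← tsum_mul_left, ← tsum_mul_left, ← tsum_mul_left]
    apply tsum_congr
    intro k
    rw [f2, f3, f5]
    cases n with
    | zero =>
      simp
    | succ N =>
      simp only [Nat.succ_sub_one]
      rw [show (((N + 1 : ℕ)) : ℤ) - 1 = (N : ℤ) by push_cast; ring, zpow_natCast, mul_pow]
      ring


lemma hexp_tsum (z : ℂ) : ∑' n : ℕ, z ^ n / (n.factorial : ℂ) = Complex.exp z := by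
  rw [Complex.exp_eq_exp_ℂ, NormedSpace.exp_eq_tsum_div]

lemma norm_cexp_le (q : ℝ) (hq0 : 0 < q) (hq1 : q < 1) (x : ℝ) (hx : 0 < x) (t : ℂ) (m : ℕ) :
    ‖Complex.exp (((qnumR q (x + m) : ℝ) : ℂ) * t)‖ ≤ Real.exp ((1 - q)⁻¹ * ‖t‖) := by
  rw [Complex.norm_exp]
  apply Real.exp_le_exp.2
  calc (((qnumR q (x + m) : ℝ) : ℂ) * t).re
      ≤ ‖((qnumR q (x + m) : ℝ) : ℂ) * t‖ := Complex.re_le_norm _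
    _ = ‖((qnumR q (x + m) : ℝ) : ℂ)‖ * ‖t‖ := by rw [norm_mul]
    _ ≤ (1 - q)⁻¹ * ‖t‖ := by
        apply mul_le_mul_of_nonneg_right
          (norm_qnumR_le q hq0 hq1 _ (add_pos_of_pos_of_nonneg hx (Nat.cast_nonneg m)))
          (norm_nonneg t)

/-- generating function of the generalized `(h,q)`-Bernoulli polynomials
attached to `χ`. -/
theorem qbetaChi_generating_function (q : ℝ) (hq0 : 0 < q) (hq1 : q < 1)
    (h : ℂ) (hh : 1 < h.re) (f : ℕ) (hf : 1 ≤ f) (χ : DirichletCharacter ℂ f)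
    (x : ℝ) (hx : 0 < x) (t : ℂ) :
    Summable (fun n : ℕ => qbetaChi q h f χ n x * t ^ n / (n.factorial : ℂ)) ∧
    Summable (fun m : ℕ => qcpow q ((h - 1) * (m : ℂ)) * χ (m : ZMod f) *
      Complex.exp ((qnumR q (x + m) : ℂ) * t)) ∧
    Summable (fun m : ℕ => qcpow q (h * (m : ℂ) + (x : ℂ)) * χ (m : ZMod f) *
      Complex.exp ((qnumR q (x + m) : ℂ) * t)) ∧
    ∑' n : ℕ, qbetaChi q h f χ n x * t ^ n / (n.factorial : ℂ) =
      (h - 1) * (1 - (q : ℂ)) *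
        (∑' m : ℕ, qcpow q ((h - 1) * (m : ℂ)) * χ (m : ZMod f) *
          Complex.exp ((qnumR q (x + m) : ℂ) * t)) -
      t * ∑' m : ℕ, qcpow q (h * (m : ℂ) + (x : ℂ)) * χ (m : ZMod f) *
          Complex.exp ((qnumR q (x + m) : ℂ) * t) := by
  have hhre : (0:ℝ) < (h - 1).re := by simp [Complex.sub_re]; linarith
  have hxm : ∀ m : ℕ, (0:ℝ) < x + m := fun m => add_pos_of_pos_of_nonneg hx (Nat.cast_nonneg m)
  have hr1lt : ‖qcpow q (h - 1)‖ < 1 := norm_qcpow_lt_one q hq0 hq1 (h - 1) hhre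
  have hr2lt : ‖qcpow q h‖ < 1 := norm_qcpow_lt_one q hq0 hq1 h (by linarith)
  have hcmt : ∀ m : ℕ, ‖((qnumR q (x + m) : ℝ) : ℂ) * t‖ ≤ |(1 - q)⁻¹| * ‖t‖ := by
    intro m
    rw [norm_mul]
    apply mul_le_mul_of_nonneg_right _ (norm_nonneg t)
    exact le_trans (norm_qnumR_le q hq0 hq1 _ (hxm m)) (le_abs_self _)
  have hr1m : ∀ m : ℕ, ‖qcpow q ((h - 1) * (m : ℂ))‖ = ‖qcpow q (h - 1)‖ ^ m := by
    intro m; rw [mul_comm, qcpow_nat_mul, norm_pow]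
  have hr2m : ∀ m : ℕ, ‖qcpow q (h * (m : ℂ))‖ = ‖qcpow q h‖ ^ m := by
    intro m; rw [mul_comm, qcpow_nat_mul, norm_pow]
  -- summability of the two exponential series (conjuncts 2 and 3)
  have hSexp1 : Summable (fun m : ℕ => qcpow q ((h - 1) * (m : ℂ)) * χ (m : ZMod f) *
      Complex.exp (((qnumR q (x + m) : ℝ) : ℂ) * t)) := by
    have e : (fun m : ℕ => qcpow q ((h - 1) * (m : ℂ)) * χ (m : ZMod f) *
        Complex.exp (((qnumR q (x + m) : ℝ) : ℂ) * t))
        = fun m : ℕ => qcpow q ((h - 1) * (m : ℂ)) * (χ (m : ZMod f) *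
          Complex.exp (((qnumR q (x + m) : ℝ) : ℂ) * t)) := by
      funext m; ring
    rw [e]
    apply summable_qcpow_mul q hq0 hq1 (h - 1) hhre _ (Real.exp ((1 - q)⁻¹ * ‖t‖))
    intro m
    rw [norm_mul]
    calc ‖χ (m : ZMod f)‖ * ‖Complex.exp (((qnumR q (x + m) : ℝ) : ℂ) * t)‖
        ≤ 1 * Real.exp ((1 - q)⁻¹ * ‖t‖) :=
          mul_le_mul (DirichletCharacter.norm_le_one χ _) (norm_cexp_le q hq0 hq1 x hx t m)
            (norm_nonneg _) zero_le_one
      _ = Real.exp ((1 - q)⁻¹ * ‖t‖) := one_mul _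
  have hSexp2 : Summable (fun m : ℕ => qcpow q (h * (m : ℂ) + (x : ℂ)) * χ (m : ZMod f) *
      Complex.exp (((qnumR q (x + m) : ℝ) : ℂ) * t)) := by
    have e : (fun m : ℕ => qcpow q (h * (m : ℂ) + (x : ℂ)) * χ (m : ZMod f) *
        Complex.exp (((qnumR q (x + m) : ℝ) : ℂ) * t))
        = fun m : ℕ => qcpow q (h * (m : ℂ)) * (qcpow q (x : ℂ) * χ (m : ZMod f) *
          Complex.exp (((qnumR q (x + m) : ℝ) : ℂ) * t)) := by
      funext m; rw [qcpow_add]; ring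
    rw [e]
    apply summable_qcpow_mul q hq0 hq1 h (by linarith) _
      (‖qcpow q (x : ℂ)‖ * Real.exp ((1 - q)⁻¹ * ‖t‖))
    intro m
    rw [norm_mul, norm_mul, mul_assoc]
    apply mul_le_mul_of_nonneg_left _ (norm_nonneg _)
    calc ‖χ (m : ZMod f)‖ * ‖Complex.exp (((qnumR q (x + m) : ℝ) : ℂ) * t)‖
        ≤ 1 * Real.exp ((1 - q)⁻¹ * ‖t‖) :=
          mul_le_mul (DirichletCharacter.norm_le_one χ _) (norm_cexp_le q hq0 hq1 x hx t m)
            (norm_nonneg _) zero_le_one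
      _ = Real.exp ((1 - q)⁻¹ * ‖t‖) := one_mul _
  -- the doubly-indexed families
  set g1 : ℕ → ℕ → ℂ := fun n m =>
    (h - 1) * (1 - (q : ℂ)) * (qcpow q ((h - 1) * (m : ℂ)) * χ (m : ZMod f)) *
      ((((qnumR q (x + m) : ℝ) : ℂ) * t) ^ n / (n.factorial : ℂ)) with hg1def
  set g2 : ℕ → ℕ → ℂ := fun n m =>
    qcpow q (h * (m : ℂ) + (x : ℂ)) * χ (m : ZMod f) * t *
      ((((qnumR q (x + m) : ℝ) : ℂ) * t) ^ n / (n.factorial : ℂ)) with hg2def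
  have hg1 : Summable (Function.uncurry g1) := by
    apply Summable.of_norm_bounded
      (g := fun p : ℕ × ℕ => ((|(1 - q)⁻¹| * ‖t‖) ^ p.1 / (p.1.factorial : ℝ)) *
        (‖h - 1‖ * ‖1 - (q : ℂ)‖ * ‖qcpow q (h - 1)‖ ^ p.2))
    · apply Summable.mul_of_nonneg (Real.summable_pow_div_factorial _)
        ((summable_geometric_of_lt_one (norm_nonneg _) hr1lt).mul_left _)
      · intro n
        have h0 : (0:ℝ) < (n.factorial : ℝ) := by exact_mod_cast Nat.factorial_pos n
        positivity
      · intro m; positivity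
    · rintro ⟨n, m⟩
      have e : Function.uncurry g1 (n, m) = (h - 1) * (1 - (q : ℂ)) *
          (qcpow q ((h - 1) * (m : ℂ)) * χ (m : ZMod f)) *
          ((((qnumR q (x + m) : ℝ) : ℂ) * t) ^ n / (n.factorial : ℂ)) := rfl
      rw [e, norm_mul, norm_mul, norm_mul, norm_mul, norm_div, norm_pow,
        Complex.norm_natCast, hr1m]
      have h0 : (0:ℝ) < (n.factorial : ℝ) := by exact_mod_cast Nat.factorial_pos n
      calc ‖h - 1‖ * ‖1 - (q:ℂ)‖ * (‖qcpow q (h - 1)‖ ^ m * ‖χ (m : ZMod f)‖) *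
            (‖((qnumR q (x + m) : ℝ) : ℂ) * t‖ ^ n / (n.factorial : ℝ))
          ≤ ‖h - 1‖ * ‖1 - (q:ℂ)‖ * (‖qcpow q (h - 1)‖ ^ m * 1) *
            ((|(1 - q)⁻¹| * ‖t‖) ^ n / (n.factorial : ℝ)) := by
            gcongr
            · exact DirichletCharacter.norm_le_one χ _
            · exact hcmt m
        _ = (|(1 - q)⁻¹| * ‖t‖) ^ n / (n.factorial : ℝ) *
            (‖h - 1‖ * ‖1 - (q:ℂ)‖ * ‖qcpow q (h - 1)‖ ^ m) := by ring
  have hg2 : Summable (Function.uncurry g2) := by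
    apply Summable.of_norm_bounded
      (g := fun p : ℕ × ℕ => ((|(1 - q)⁻¹| * ‖t‖) ^ p.1 / (p.1.factorial : ℝ)) *
        ((‖qcpow q (x : ℂ)‖ * ‖t‖) * ‖qcpow q h‖ ^ p.2))
    · apply Summable.mul_of_nonneg (Real.summable_pow_div_factorial _)
        ((summable_geometric_of_lt_one (norm_nonneg _) hr2lt).mul_left _)
      · intro n
        have h0 : (0:ℝ) < (n.factorial : ℝ) := by exact_mod_cast Nat.factorial_pos n
        positivity
      · intro m; positivity
    · rintro ⟨n, m⟩
      have e : Function.uncurry g2 (n, m) = qcpow q (h * (m : ℂ)) * qcpow q (x : ℂ) *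
          χ (m : ZMod f) * t *
          ((((qnumR q (x + m) : ℝ) : ℂ) * t) ^ n / (n.factorial : ℂ)) := by
        show g2 n m = _
        rw [hg2def]
        simp only []
        rw [qcpow_add]
      rw [e, norm_mul, norm_mul, norm_mul, norm_mul, norm_div, norm_pow,
        Complex.norm_natCast, hr2m]
      have h0 : (0:ℝ) < (n.factorial : ℝ) := by exact_mod_cast Nat.factorial_pos n
      calc ‖qcpow q h‖ ^ m * ‖qcpow q (x : ℂ)‖ * ‖χ (m : ZMod f)‖ * ‖t‖ *
            (‖((qnumR q (x + m) : ℝ) : ℂ) * t‖ ^ n / (n.factorial : ℝ))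
          ≤ ‖qcpow q h‖ ^ m * ‖qcpow q (x : ℂ)‖ * 1 * ‖t‖ *
            ((|(1 - q)⁻¹| * ‖t‖) ^ n / (n.factorial : ℝ)) := by
            gcongr
            · exact DirichletCharacter.norm_le_one χ _
            · exact hcmt m
        _ = (|(1 - q)⁻¹| * ‖t‖) ^ n / (n.factorial : ℝ) *
            ((‖qcpow q (x : ℂ)‖ * ‖t‖) * ‖qcpow q h‖ ^ m) := by ring
  -- row sums
  set u : ℕ → ℂ := fun n => ∑' m : ℕ, g1 n m with hu
  set v : ℕ → ℂ := fun n => ∑' m : ℕ, g2 n m with hv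
  have hSu : HasSum u (∑' p : ℕ × ℕ, Function.uncurry g1 p) :=
    hg1.hasSum.prod_fiberwise (fun n => (hg1.prod_factor n).hasSum)
  have hSv : HasSum v (∑' p : ℕ × ℕ, Function.uncurry g2 p) :=
    hg2.hasSum.prod_fiberwise (fun n => (hg2.prod_factor n).hasSum)
  -- identify the row sums with the closed-form pieces
  have hu_eq : ∀ n : ℕ, u n = (h - 1) * (1 - (q : ℂ)) * (t ^ n / (n.factorial : ℂ)) *
      ∑' m : ℕ, qcpow q ((h - 1) * (m : ℂ)) * χ (m : ZMod f) *
        ((qnumR q (x + m) : ℝ) : ℂ) ^ n := by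
    intro n
    rw [hu]
    simp only []
    rw [← tsum_mul_left]
    apply tsum_congr
    intro m
    rw [hg1def]
    simp only []
    rw [mul_pow]
    ring
  have hv_eq : ∀ n : ℕ, v n = t ^ (n + 1) / (n.factorial : ℂ) *
      ∑' m : ℕ, qcpow q (h * (m : ℂ) + (x : ℂ)) * χ (m : ZMod f) *
        ((qnumR q (x + m) : ℝ) : ℂ) ^ n := by
    intro n
    rw [hv]
    simp only []
    rw [← tsum_mul_left]
    apply tsum_congr
    intro m
    rw [hg2def]
    simp only []
    rw [mul_pow, pow_succ]
    ring
  -- the shifted second piece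
  set w : ℕ → ℂ := fun n => (n : ℂ) * (t ^ n / (n.factorial : ℂ)) *
      ∑' m : ℕ, qcpow q (h * (m : ℂ) + (x : ℂ)) * χ (m : ZMod f) *
        ((qnumR q (x + m) : ℝ) : ℂ) ^ (n - 1) with hw
  have hfacC : ∀ n : ℕ, ((n.factorial : ℕ) : ℂ) ≠ 0 := fun n => by
    exact_mod_cast (Nat.factorial_ne_zero n)
  have hwv : ∀ n : ℕ, w (n + 1) = v n := by
    intro n
    rw [hw, hv_eq n]
    simp only [Nat.succ_sub_one]
    have h1 : ((n : ℂ) + 1) ≠ 0 := by exact_mod_cast Nat.cast_add_one_ne_zero (R := ℂ) n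
    have h2 := hfacC n
    rw [Nat.factorial_succ]
    push_cast
    field_simp
  have hterm : ∀ n : ℕ, qbetaChi q h f χ n x * t ^ n / (n.factorial : ℂ) = u n - w n := by
    intro n
    rw [qbetaChi_closed q hq0 hq1 h hh f hf χ x hx n, hu_eq n, hw]
    simp only []
    ring
  have hSw : Summable w := by
    apply (summable_nat_add_iff 1).1
    apply Summable.congr hSv.summable
    intro n
    exact (hwv n).symm
  have hSterm : Summable (fun n : ℕ => qbetaChi q h f χ n x * t ^ n / (n.factorial : ℂ)) := by
    apply Summable.congr (hSu.summable.sub hSw)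
    intro n
    exact (hterm n).symm
  refine ⟨hSterm, hSexp1, hSexp2, ?_⟩
  rw [tsum_congr hterm, Summable.tsum_sub hSu.summable hSw]
  have htw : ∑' n, w n = ∑' n, v n := by
    rw [Summable.tsum_eq_zero_add hSw, tsum_congr hwv]
    have hw0 : w 0 = 0 := by rw [hw]; simp
    rw [hw0, zero_add]
  rw [htw]
  rw [hSu.tsum_eq, hSv.tsum_eq]
  rw [Summable.tsum_prod' hg1 hg1.prod_factor, Summable.tsum_prod' hg2 hg2.prod_factor]
  simp only [Function.uncurry_apply_pair]
  rw [← Summable.tsum_comm hg1, ← Summable.tsum_comm hg2]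
  have hcol1 : ∀ m : ℕ, ∑' n : ℕ, g1 n m = (h - 1) * (1 - (q:ℂ)) *
      (qcpow q ((h - 1) * (m : ℂ)) * χ (m : ZMod f) *
        Complex.exp (((qnumR q (x + m) : ℝ) : ℂ) * t)) := by
    intro m
    rw [hg1def]
    simp only []
    rw [tsum_mul_left, hexp_tsum]
    ring
  have hcol2 : ∀ m : ℕ, ∑' n : ℕ, g2 n m = t *
      (qcpow q (h * (m : ℂ) + (x : ℂ)) * χ (m : ZMod f) *
        Complex.exp (((qnumR q (x + m) : ℝ) : ℂ) * t)) := by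
    intro m
    rw [hg2def]
    simp only []
    rw [tsum_mul_left, hexp_tsum]
    ring
  rw [tsum_congr hcol1, tsum_congr hcol2, tsum_mul_left, tsum_mul_left]
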